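/- Contour identity for s-holomorphic functions (well-definedness step in the proof of Proposition 3.3): Let δ > 0, b ∈ ℂ, set c = b + δ/2, and let t₁ < t₂ be reals. Let F : ℂ → ℂ be such that for every t ∈ [t₁, t₂], F is s-holomorphic at the white point b + it, and such that t ↦ F(b + it) and t ↦ F(c + it) are continuous on [t₁, t₂]. Then ∫_{t₁}^{t₂} [ (2/δ)·F^↑(c + it)·F^↓(c + it) − (2/δ)·F^↑(b + it)·F^↓(b + it) ] dt = |F^↓(b + it₂)|² − |F^↓(b + it₁)|². -/

import Mathlib

noncomputable section

/-- Projection of `a` onto the line `e^{-iπ/4}·ℝ`. -/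
def projUp (a : ℂ) : ℂ := (a - Complex.I * (starRingEnd ℂ) a) / 2

/-- Projection of `a` onto the line `e^{iπ/4}·ℝ`. -/
def projDn (a : ℂ) : ℂ := (a + Complex.I * (starRingEnd ℂ) a) / 2

/-- `F^↑(z)`, the projection of `F z` onto `e^{-iπ/4}·ℝ`. -/
def Fup (F : ℂ → ℂ) (z : ℂ) : ℂ := projUp (F z)

/-- `F^↓(z)`, the projection of `F z` onto `e^{iπ/4}·ℝ`. -/
def Fdn (F : ℂ → ℂ) (z : ℂ) : ℂ := projDn (F z)

/-- Vertical derivative: `G` has derivative `d` at `z` in the vertical direction,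
i.e. the map `t ↦ G (z + i t)` (for real `t`) has derivative `d` at `t = 0`. -/
def HasVDerivAt {E : Type*} [NormedAddCommGroup E] [NormedSpace ℝ E]
    (G : ℂ → E) (d : E) (z : ℂ) : Prop :=
  HasDerivAt (fun t : ℝ => G (z + (t : ℂ) * Complex.I)) d 0

/-- Second vertical derivative: there is a function `G'` which is a vertical derivative of `G`
at all points `z + i t` for `t` near `0`, and `G'` has vertical derivative `d` at `z`. -/
def HasVDeriv2At {E : Type*} [NormedAddCommGroup E] [NormedSpace ℝ E]
    (G : ℂ → E) (d : E) (z : ℂ) : Prop :=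
  ∃ G' : ℂ → E,
    (∀ᶠ t in nhds (0 : ℝ), HasVDerivAt G (G' (z + (t : ℂ) * Complex.I)) (z + (t : ℂ) * Complex.I))
    ∧ HasVDerivAt G' d z

/-- `F` is s-holomorphic at a white point `w`. -/
def SHolWhite (δ : ℝ) (F : ℂ → ℂ) (w : ℂ) : Prop :=
  Fup F w = Fup F (w - (δ / 2 : ℝ)) ∧ Fdn F w = Fdn F (w + (δ / 2 : ℝ)) ∧
  HasVDerivAt (Fup F) (Complex.I / δ * (Fdn F (w + (δ / 2 : ℝ)) - Fdn F (w - (δ / 2 : ℝ)))) w ∧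
  HasVDerivAt (Fdn F) (Complex.I / δ * (Fup F (w + (δ / 2 : ℝ)) - Fup F (w - (δ / 2 : ℝ)))) w

/-- `F` is s-holomorphic at a black point `u`. -/
def SHolBlack (δ : ℝ) (F : ℂ → ℂ) (u : ℂ) : Prop :=
  Fup F u = Fup F (u + (δ / 2 : ℝ)) ∧ Fdn F u = Fdn F (u - (δ / 2 : ℝ)) ∧
  HasVDerivAt (Fup F) (Complex.I / δ * (Fdn F (u + (δ / 2 : ℝ)) - Fdn F (u - (δ / 2 : ℝ)))) u ∧
  HasVDerivAt (Fdn F) (Complex.I / δ * (Fup F (u + (δ / 2 : ℝ)) - Fup F (u - (δ / 2 : ℝ)))) u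

/-- Black points `Ω^•` of the rectangular discrete domain `Ω_δ`:
points `δ k + i t` with `m ≤ k ≤ n` and `t ∈ [c, d]`. -/
def BlackPts (δ : ℝ) (m n : ℤ) (c d : ℝ) : Set ℂ :=
  {z | (∃ k : ℤ, m ≤ k ∧ k ≤ n ∧ z.re = δ * k) ∧ c ≤ z.im ∧ z.im ≤ d}

/-- White points `Ω^∘` of the rectangular discrete domain `Ω_δ`:
points `δ (k + 1/2) + i t` with `m ≤ k ≤ n - 1` and `t ∈ [c, d]`. -/
def WhitePts (δ : ℝ) (m n : ℤ) (c d : ℝ) : Set ℂ :=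
  {z | (∃ k : ℤ, m ≤ k ∧ k ≤ n - 1 ∧ z.re = δ * (k + 1 / 2)) ∧ c ≤ z.im ∧ z.im ≤ d}

/-- Interior black points: `m < k < n` and `c < t < d`. -/
def IntBlackPts (δ : ℝ) (m n : ℤ) (c d : ℝ) : Set ℂ :=
  {z | (∃ k : ℤ, m < k ∧ k < n ∧ z.re = δ * k) ∧ c < z.im ∧ z.im < d}

/-- Interior white points: `m ≤ k ≤ n - 1` and `c < t < d`. -/
def IntWhitePts (δ : ℝ) (m n : ℤ) (c d : ℝ) : Set ℂ :=
  {z | (∃ k : ℤ, m ≤ k ∧ k ≤ n - 1 ∧ z.re = δ * (k + 1 / 2)) ∧ c < z.im ∧ z.im < d}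

lemma conj_projUp (a : ℂ) : (starRingEnd ℂ) (projUp a) = Complex.I * projUp a := by
  simp only [projUp, map_div₀, map_sub, map_mul, Complex.conj_I, Complex.conj_conj,
    map_ofNat]
  ring_nf
  rw [Complex.I_sq]
  ring

lemma conj_projDn (a : ℂ) : (starRingEnd ℂ) (projDn a) = -Complex.I * projDn a := by
  simp only [projDn, map_div₀, map_add, map_mul, Complex.conj_I, Complex.conj_conj,
    map_ofNat]
  ring_nf
  rw [Complex.I_sq]
  ring

lemma vderiv_shift {G : ℂ → ℂ} {d : ℂ} {b : ℂ} {t : ℝ}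
    (h : HasVDerivAt G d (b + (t : ℂ) * Complex.I)) :
    HasDerivAt (fun s : ℝ => G (b + (s : ℂ) * Complex.I)) d t := by
  have h1 : HasDerivAt (fun u : ℝ => G (b + (t : ℂ) * Complex.I + (u : ℂ) * Complex.I)) d 0 := h
  have h2 : HasDerivAt (fun s : ℝ => s - t) 1 t := (hasDerivAt_id t).sub_const t
  rw [show (0:ℝ) = t - t by ring] at h1
  have h3 : HasDerivAt
      ((fun u : ℝ => G (b + (t : ℂ) * Complex.I + (u : ℂ) * Complex.I)) ∘ fun s : ℝ => s - t)
      ((1:ℝ) • d) t := HasDerivAt.scomp t (by exact h1) h2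
  have heq : (fun s : ℝ => G (b + (s : ℂ) * Complex.I))
      = (fun u : ℝ => G (b + (t : ℂ) * Complex.I + (u : ℂ) * Complex.I)) ∘ (fun s : ℝ => s - t) := by
    funext s
    simp only [Function.comp]
    congr 1
    push_cast
    ring
  rw [heq]
  simpa using h3

lemma normsq_hasDerivAt {g : ℝ → ℂ} {d : ℂ} {t : ℝ} (hg : HasDerivAt g d t) :
    HasDerivAt (fun s => ‖g s‖ ^ 2) (2 * ((starRingEnd ℂ) (g t) * d).re) t := by
  have hre : HasDerivAt (fun s => (g s).re) d.re t :=
    Complex.reCLM.hasFDerivAt.comp_hasDerivAt t hg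
  have him : HasDerivAt (fun s => (g s).im) d.im t :=
    Complex.imCLM.hasFDerivAt.comp_hasDerivAt t hg
  have h : HasDerivAt (fun s => (g s).re ^ 2 + (g s).im ^ 2) _ t := (hre.pow 2).add (him.pow 2)
  have heq : (fun s => ‖g s‖ ^ 2) = fun s => (g s).re ^ 2 + (g s).im ^ 2 := by
    funext s
    rw [Complex.sq_norm, Complex.normSq_apply]
    ring
  rw [heq]
  convert h using 1
  simp only [Complex.mul_re, Complex.conj_re, Complex.conj_im]
  ring

open intervalIntegral in
/-- Contour identity for s-holomorphic functions (well-definedness step in the proof of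
Proposition 3.3). -/
theorem contour_identity
    (δ : ℝ) (hδ : 0 < δ) (b : ℂ) (t₁ t₂ : ℝ) (ht : t₁ < t₂) (F : ℂ → ℂ)
    (hsh : ∀ t ∈ Set.Icc t₁ t₂, SHolWhite δ F (b + (t : ℂ) * Complex.I))
    (hcontb : ContinuousOn (fun t : ℝ => F (b + (t : ℂ) * Complex.I)) (Set.Icc t₁ t₂))
    (hcontc : ContinuousOn
      (fun t : ℝ => F (b + (δ / 2 : ℝ) + (t : ℂ) * Complex.I)) (Set.Icc t₁ t₂)) :
    (∫ t in t₁..t₂,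
        (2 / (δ : ℂ) * Fup F (b + (δ / 2 : ℝ) + (t : ℂ) * Complex.I)
            * Fdn F (b + (δ / 2 : ℝ) + (t : ℂ) * Complex.I)
          - 2 / (δ : ℂ) * Fup F (b + (t : ℂ) * Complex.I)
            * Fdn F (b + (t : ℂ) * Complex.I)))
      = ((‖Fdn F (b + (t₂ : ℂ) * Complex.I)‖ ^ 2
          - ‖Fdn F (b + (t₁ : ℂ) * Complex.I)‖ ^ 2 : ℝ) : ℂ) := by
  have hδ' : (δ : ℂ) ≠ 0 := by exact_mod_cast hδ.ne'
  set g : ℝ → ℂ := fun t => Fdn F (b + (t : ℂ) * Complex.I) with hg_def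
  set f' : ℝ → ℂ := fun t =>
    (2 / (δ : ℂ) * Fup F (b + (δ / 2 : ℝ) + (t : ℂ) * Complex.I)
        * Fdn F (b + (δ / 2 : ℝ) + (t : ℂ) * Complex.I)
      - 2 / (δ : ℂ) * Fup F (b + (t : ℂ) * Complex.I)
        * Fdn F (b + (t : ℂ) * Complex.I)) with hf'_def
  have key : ∀ t ∈ Set.uIcc t₁ t₂,
      HasDerivAt (fun s : ℝ => ((‖g s‖ ^ 2 : ℝ) : ℂ)) (f' t) t := by
    intro t htmem
    rw [Set.uIcc_of_le ht.le] at htmem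
    obtain ⟨h1, h2, _, h4⟩ := hsh t htmem
    set w : ℂ := b + (t : ℂ) * Complex.I with hw_def
    set d : ℂ := Complex.I / δ * (Fup F (w + (δ / 2 : ℝ)) - Fup F (w - (δ / 2 : ℝ))) with hd_def
    have hdg : HasDerivAt g d t := vderiv_shift h4
    have hH : HasDerivAt (fun s : ℝ => ((‖g s‖ ^ 2 : ℝ) : ℂ))
        ((2 * ((starRingEnd ℂ) (g t) * d).re : ℝ) : ℂ) t :=
      (normsq_hasDerivAt hdg).ofReal_comp
    have hconjg : (starRingEnd ℂ) (g t) = -Complex.I * g t := conj_projDn (F w)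
    have hconjd : (starRingEnd ℂ) d = -Complex.I * d := by
      rw [hd_def]
      simp only [map_mul, map_sub, map_div₀, Complex.conj_I, Complex.conj_ofReal]
      rw [show Fup F (w + (δ / 2 : ℝ)) = projUp (F (w + (δ / 2 : ℝ))) from rfl,
        show Fup F (w - (δ / 2 : ℝ)) = projUp (F (w - (δ / 2 : ℝ))) from rfl,
        conj_projUp, conj_projUp]
      ring
    have hval : ((2 * ((starRingEnd ℂ) (g t) * d).re : ℝ) : ℂ) = f' t := by
      have h2re : ((2 * ((starRingEnd ℂ) (g t) * d).re : ℝ) : ℂ)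
          = (starRingEnd ℂ) (g t) * d + (starRingEnd ℂ) ((starRingEnd ℂ) (g t) * d) := by
        rw [← Complex.add_conj]
      rw [h2re, map_mul, Complex.conj_conj, hconjg, hconjd, hf'_def]
      have hwc : b + ((δ / 2 : ℝ) : ℂ) + (t : ℂ) * Complex.I = w + ((δ / 2 : ℝ) : ℂ) := by
        rw [hw_def]; ring
      simp only [hwc, ← hw_def]
      rw [← h2, h1]
      have hgw : g t = Fdn F w := rfl
      rw [hgw, hd_def]
      field_simp
      ring_nf
      rw [Complex.I_sq]
      ring
    rw [← hval]
    exact hH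
  have hcont : ContinuousOn f' (Set.uIcc t₁ t₂) := by
    rw [Set.uIcc_of_le ht.le]
    have hconj : Continuous fun a : ℂ => (starRingEnd ℂ) a := Complex.continuous_conj
    have hpu : Continuous projUp :=
      ((continuous_id.sub (continuous_const.mul hconj)).div_const 2)
    have hpd : Continuous projDn :=
      ((continuous_id.add (continuous_const.mul hconj)).div_const 2)
    exact ((continuousOn_const.mul (hpu.comp_continuousOn hcontc)).mul
        (hpd.comp_continuousOn hcontc)).sub
      ((continuousOn_const.mul (hpu.comp_continuousOn hcontb)).mul
        (hpd.comp_continuousOn hcontb))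
  have := intervalIntegral.integral_eq_sub_of_hasDerivAt key (hcont.intervalIntegrable)
  rw [hf'_def] at this
  rw [this]
  push_cast
  ring
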